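/- arXiv:math/0202028 — 2 statements merged into one kernel-verified Lean document; each statement's English description precedes it below -/
import Mathlib

section
/- Let M ⊆ V[t,t⁻¹] be a graded k[t]-submodule for which there exists N ∈ ℕ with t^N · (V ⊗ k[t]) ⊆ M ⊆ t^{−N} · (V ⊗ k[t]). Then: F_M(n+1) ⊆ F_M(n) for every n ∈ ℤ; F_M(n) = V for all n ≤ −N; F_M(n) = 0 for all n > N; M = ⊕_{n ∈ ℤ} F_M(n) ⊗ t^{−n}, i.e. every element of M is a finite sum of homogeneous elements v ⊗ t^{−n} with v ∈ F_M(n); and M is a free k[t]-module of rank dim_k V. (This is the paper's Corollary 'cutting down' together with Corollary 'def of ρ', giving the correspondence between graded submodules of the formal loop space and decreasing filtrations.) -/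
open Submodule Set

lemma adapted_basis {k V : Type*} [Field k] [AddCommGroup V] [Module k V]
    [FiniteDimensional k V]
    (FM : ℤ → Submodule k V) (hmono : ∀ a b : ℤ, a ≤ b → FM b ≤ FM a)
    (N : ℕ) (htop : FM (-(N : ℤ)) = ⊤) (hbot : FM ((N : ℤ) + 1) = ⊥) :
    ∃ (e : Module.Basis (Fin (Module.finrank k V)) k V) (ρ : Fin (Module.finrank k V) → ℤ),
      (∀ i, e i ∈ FM (ρ i)) ∧
      (∀ n : ℤ, FM n ≤ Submodule.span k (e '' {i | n ≤ ρ i})) := by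
  classical
  have key : ∀ m : ℕ, ∃ (s : Set V) (ρ : V → ℤ),
      (LinearIndependent k ((↑) : s → V)) ∧
      (∀ x ∈ s, (N : ℤ) + 1 - m ≤ ρ x) ∧
      (∀ x ∈ s, x ∈ FM (ρ x)) ∧
      (∀ n : ℤ, (N : ℤ) + 1 - m ≤ n → FM n ≤ span k {x ∈ s | n ≤ ρ x}) ∧
      span k s = FM ((N : ℤ) + 1 - m) := by
    intro m
    induction m with
    | zero =>
      refine ⟨∅, fun _ => 0, linearIndependent_empty _ _, by simp, by simp, ?_, by simp [hbot]⟩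
      intro n hn
      have h1 : FM n ≤ FM ((N : ℤ) + 1) := hmono _ _ (by push_cast at hn; omega)
      rw [hbot] at h1
      refine le_trans h1 bot_le
    | succ m ih =>
      obtain ⟨s, ρ, hind, hge, hmem, hsp, hspan⟩ := ih
      set n₀ : ℤ := (N : ℤ) + 1 - m with hn₀
      have hn₁ : (N : ℤ) + 1 - (m + 1 : ℕ) = n₀ - 1 := by push_cast; ring
      set n₁ : ℤ := n₀ - 1 with hn1def
      have hsub : s ⊆ (FM n₁ : Set V) := by
        intro x hx
        exact hmono n₁ (ρ x) (by have := hge x hx; omega) (hmem x hx)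
      obtain ⟨b, hbt, hsb, htb, hbi⟩ :=
        by have := exists_linearIndepOn_extension (v := id) hind (Set.subset_union_left (t := (FM n₁ : Set V))); simp only [Set.image_id] at this; exact this
      have hbsub : b ⊆ (FM n₁ : Set V) := by
        intro x hx
        rcases hbt hx with h | h
        · exact hsub h
        · exact h
      have hspanb : span k b = FM n₁ := by
        apply le_antisymm
        · rw [span_le]; exact hbsub
        · intro x hx
          exact htb (Or.inr hx)
      set ρ' : V → ℤ := fun x => if x ∈ s then ρ x else n₁ with hρ'
      have hge' : ∀ x ∈ b, n₁ ≤ ρ' x := by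
        intro x hx
        by_cases h : x ∈ s
        · simp only [hρ', if_pos h]
          have := hge x h; omega
        · simp only [hρ', if_neg h]; exact le_refl _
      refine ⟨b, ρ', hbi, ?_, ?_, ?_, ?_⟩
      · intro x hx; rw [hn₁]; exact hge' x hx
      · intro x hx
        by_cases h : x ∈ s
        · simp only [hρ', if_pos h]; exact hmem x h
        · simp only [hρ', if_neg h]; exact hbsub hx
      · intro n hn
        rw [hn₁] at hn
        rcases eq_or_lt_of_le hn with h | h
        · have hset : {x ∈ b | n ≤ ρ' x} = b := by
            ext x; simp only [Set.mem_setOf_eq, and_iff_left_iff_imp]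
            intro hx; rw [← h]; exact hge' x hx
          rw [hset, hspanb, ← h]
        · have hn0 : n₀ ≤ n := by omega
          refine le_trans (hsp n hn0) (Submodule.span_mono ?_)
          intro x hx
          obtain ⟨hxs, hxρ⟩ := hx
          exact ⟨hsb hxs, by simp only [hρ', if_pos hxs]; exact hxρ⟩
      · rw [hn₁]; exact hspanb
  obtain ⟨s, ρ, hind, hge, hmem, hsp, hspan⟩ := key (2 * N + 1)
  have hval : (N : ℤ) + 1 - (2 * N + 1 : ℕ) = -(N : ℤ) := by push_cast; ring
  rw [hval] at hge hsp hspan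
  rw [htop] at hspan
  have hsfin : s.Finite := LinearIndependent.setFinite hind
  haveI := hsfin.fintype
  let b0 : Module.Basis s k V := Module.Basis.mk hind (by rw [Subtype.range_coe]; exact hspan.ge)
  have hcard : Module.finrank k V = Fintype.card s := Module.finrank_eq_card_basis b0
  let eq : s ≃ Fin (Module.finrank k V) := Fintype.equivFinOfCardEq hcard.symm
  refine ⟨b0.reindex eq, fun i => ρ ((eq.symm i : V)), ?_, ?_⟩
  · intro i
    rw [Module.Basis.reindex_apply, Module.Basis.mk_apply]
    exact hmem _ (eq.symm i).2
  · intro n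
    by_cases hn : -(N : ℤ) ≤ n
    · refine le_trans (hsp n hn) (Submodule.span_mono ?_)
      rintro x ⟨hxs, hxρ⟩
      refine ⟨eq ⟨x, hxs⟩, ?_, ?_⟩
      · simp only [Set.mem_setOf_eq, Equiv.symm_apply_apply]; exact hxρ
      · rw [Module.Basis.reindex_apply, Module.Basis.mk_apply, Equiv.symm_apply_apply]
    · have hset : {i : Fin (Module.finrank k V) | n ≤ ρ ((eq.symm i : V))} = Set.univ := by
        ext i; simp only [Set.mem_setOf_eq, Set.mem_univ, iff_true]
        have := hge _ (eq.symm i).2; omega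
      rw [hset, Set.image_univ, Module.Basis.span_eq]
      exact le_top



/-- A graded `k[t]`-submodule `M` of the formal loop space `V[t,t⁻¹]` (modelled as `ℤ →₀ V`,
with `T` the multiplication-by-`t` operator) squeezed between `t^N·(V ⊗ k[t])` and
`t^{-N}·(V ⊗ k[t])` corresponds to a decreasing, exhausting and separating filtration
`F_M(n) = {v | v ⊗ t^{-n} ∈ M}`: the filtration is decreasing, equals `V` for `n ≤ -N`,
vanishes for `n > N`, `M = ⊕_n F_M(n) ⊗ t^{-n}`, and `M` is a free `k[t]`-module of rank
`dim_k V`, i.e. it admits a `k`-basis of the form `{T^j (v i)}` indexed by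
`Fin (dim V) × ℕ`. -/
theorem stmt_3 {k V : Type*} [Field k] [AddCommGroup V] [Module k V] [FiniteDimensional k V]
    (T : Module.End k (ℤ →₀ V))
    (hT : ∀ (p : ℤ) (v : V), T (Finsupp.single p v) = Finsupp.single (p + 1) v)
    (M : Submodule k (ℤ →₀ V))
    (hTM : ∀ f ∈ M, T f ∈ M)
    (hgraded : ∀ f ∈ M, ∀ p : ℤ, Finsupp.single p (f p) ∈ M)
    (N : ℕ)
    (hlow : ∀ (p : ℤ) (v : V), (N : ℤ) ≤ p → Finsupp.single p v ∈ M)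
    (hhigh : ∀ f ∈ M, ∀ p : ℤ, p < -(N : ℤ) → f p = 0)
    (FM : ℤ → Submodule k V)
    (hFM : ∀ n : ℤ, FM n = M.comap (Finsupp.lsingle (-n))) :
    (∀ n : ℤ, FM (n + 1) ≤ FM n) ∧
    (∀ n : ℤ, n ≤ -(N : ℤ) → FM n = ⊤) ∧
    (∀ n : ℤ, (N : ℤ) < n → FM n = ⊥) ∧
    (M = ⨆ n : ℤ, (FM n).map (Finsupp.lsingle (-n))) ∧
    (∃ (v : Fin (Module.finrank k V) → (ℤ →₀ V))
       (b : Module.Basis (Fin (Module.finrank k V) × ℕ) k M),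
        ∀ (i : Fin (Module.finrank k V)) (j : ℕ), (b (i, j) : ℤ →₀ V) = (T ^ j) (v i)) := by
  classical
  have hmem' : ∀ (n : ℤ) (x : V), x ∈ FM n ↔ Finsupp.single (-n) x ∈ M := by
    intro n x
    rw [hFM n]
    exact Iff.rfl
  -- Part 1
  have part1 : ∀ n : ℤ, FM (n + 1) ≤ FM n := by
    intro n x hx
    rw [hmem'] at hx ⊢
    have := hTM _ hx
    rw [hT] at this
    have he : -(n + 1) + 1 = -n := by ring
    rwa [he] at this
  -- Part 2
  have part2 : ∀ n : ℤ, n ≤ -(N : ℤ) → FM n = ⊤ := by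
    intro n hn
    rw [eq_top_iff]
    intro x _
    rw [hmem']
    exact hlow _ x (by omega)
  -- Part 3
  have part3 : ∀ n : ℤ, (N : ℤ) < n → FM n = ⊥ := by
    intro n hn
    rw [eq_bot_iff]
    intro x hx
    rw [hmem'] at hx
    have := hhigh _ hx (-n) (by omega)
    rw [Finsupp.single_eq_same] at this
    simp [this]
  -- Part 4
  have hgr : ∀ f ∈ M, ∀ p : ℤ, f p ∈ FM (-p) := by
    intro f hf p
    rw [hmem', neg_neg]
    exact hgraded f hf p
  have part4 : M = ⨆ n : ℤ, (FM n).map (Finsupp.lsingle (-n)) := by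
    apply le_antisymm
    · intro f hf
      rw [← Finsupp.sum_single f]
      refine Submodule.sum_mem _ ?_
      intro p hp
      refine Submodule.mem_iSup_of_mem (-p) ?_
      simp only [neg_neg]
      exact Submodule.mem_map_of_mem (hgr f hf p)
    · refine iSup_le fun n => ?_
      rw [Submodule.map_le_iff_le_comap, ← hFM n]
  -- Part 5
  have hmono : ∀ a b : ℤ, a ≤ b → FM b ≤ FM a := by
    have step : ∀ (n : ℤ) (m : ℕ), FM (n + m) ≤ FM n := by
      intro n m
      induction m with
      | zero => simp
      | succ m ih =>
        have : FM (n + (m + 1 : ℕ)) = FM ((n + m) + 1) := by push_cast; ring_nf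
        rw [this]
        exact le_trans (part1 (n + m)) ih
    intro a b hab
    have : b = a + ((b - a).toNat : ℤ) := by omega
    rw [this]
    exact step a _
  obtain ⟨e, ρ, hemem, hespan⟩ := adapted_basis FM hmono N (part2 _ le_rfl) (part3 _ (by omega))
  have hTpow : ∀ (j : ℕ) (p : ℤ) (w : V), (T ^ j) (Finsupp.single p w) = Finsupp.single (p + j) w := by
    intro j
    induction j with
    | zero => intro p w; simp
    | succ j ih =>
      intro p w
      rw [pow_succ', Module.End.mul_apply, ih, hT]
      congr 1
      push_cast
      ring
  set Bfam : Fin (Module.finrank k V) × ℕ → (ℤ →₀ V) := fun ij => Finsupp.single (-(ρ ij.1) + ij.2) (e ij.1) with hBfam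
  have hBmem : ∀ ij, Bfam ij ∈ M := by
    rintro ⟨i, j⟩
    induction j with
    | zero =>
      simp only [hBfam, Nat.cast_zero, add_zero]
      rw [← hmem']
      exact hemem i
    | succ j ih =>
      have : Bfam (i, j + 1) = T (Bfam (i, j)) := by
        simp only [hBfam, hT]
        congr 1
        push_cast
        ring
      rw [this]
      exact hTM _ ih
  -- linear independence
  have hBindep : LinearIndependent k Bfam := by
    have hf : ∀ p : ℤ, LinearIndependent k (fun i : {i : Fin (Module.finrank k V) // -p ≤ ρ i} => e i.1) :=
      fun p => e.linearIndependent.comp _ Subtype.val_injective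
    have big := Finsupp.linearIndependent_single _ hf
    let g : Fin (Module.finrank k V) × ℕ → Σ p : ℤ, {i : Fin (Module.finrank k V) // -p ≤ ρ i} :=
      fun ij => ⟨-(ρ ij.1) + ij.2, ⟨ij.1, by omega⟩⟩
    have hg : Function.Injective g := by
      rintro ⟨a1, a2⟩ ⟨b1, b2⟩ hab
      have h2 : a1 = b1 :=
        congrArg (fun x : Σ p : ℤ, {i : Fin (Module.finrank k V) // -p ≤ ρ i} => x.2.1) hab
      have h1 : -(ρ a1) + (a2 : ℤ) = -(ρ b1) + (b2 : ℤ) :=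
        congrArg (fun x : Σ p : ℤ, {i : Fin (Module.finrank k V) // -p ≤ ρ i} => x.1) hab
      subst h2
      simp only [Prod.mk.injEq]
      exact ⟨trivial, by omega⟩
    exact big.comp g hg
  -- span
  have hBspan : Submodule.span k (Set.range Bfam) = M := by
    apply le_antisymm
    · rw [Submodule.span_le]
      rintro _ ⟨ij, rfl⟩
      exact hBmem ij
    · intro f hf
      rw [← Finsupp.sum_single f]
      refine Submodule.sum_mem _ ?_
      intro p hp
      have h1 : f p ∈ Submodule.span k (e '' {i | -p ≤ ρ i}) := hespan (-p) (hgr f hf p)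
      have h2 : Finsupp.single p (f p) ∈
          Submodule.map (Finsupp.lsingle (R := k) p) (Submodule.span k (e '' {i | -p ≤ ρ i})) :=
        Submodule.mem_map_of_mem h1
      rw [Submodule.map_span] at h2
      refine Submodule.span_mono ?_ h2
      rintro _ ⟨_, ⟨i, hi, rfl⟩, rfl⟩
      refine ⟨(i, (p + ρ i).toNat), ?_⟩
      simp only [hBfam, Finsupp.lsingle_apply]
      congr 1
      have : ((p + ρ i).toNat : ℤ) = p + ρ i := Int.toNat_of_nonneg (by simp only [Set.mem_setOf_eq] at hi; omega)
      omega
  set Bm : Fin (Module.finrank k V) × ℕ → M := fun ij => ⟨Bfam ij, hBmem ij⟩ with hBm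
  have hBmindep : LinearIndependent k Bm := by
    apply LinearIndependent.of_comp M.subtype
    exact hBindep
  have hBmspan : ⊤ ≤ Submodule.span k (Set.range Bm) := by
    have hmap : Submodule.map M.subtype (Submodule.span k (Set.range Bm)) =
        Submodule.span k (Set.range Bfam) := by
      rw [Submodule.map_span]
      congr 1
      rw [← Set.range_comp]
      rfl
    have : Submodule.map M.subtype (Submodule.span k (Set.range Bm)) =
        Submodule.map M.subtype ⊤ := by
      rw [hmap, hBspan, Submodule.map_subtype_top]
    exact (Submodule.map_injective_of_injective M.injective_subtype this).ge
  refine ⟨part1, part2, part3, part4, fun i => Finsupp.single (-(ρ i)) (e i),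
    Module.Basis.mk hBmindep hBmspan, ?_⟩
  intro i j
  rw [Module.Basis.mk_apply]
  show Bfam (i, j) = _
  rw [hTpow]
end

section
/- Let V and W be finite-dimensional k-vector spaces, let M ⊆ V[t,t⁻¹] be a graded k[t]-submodule containing t^{N₀} · (V ⊗ k[t]) for some N₀ ∈ ℕ, let N ⊆ W[t,t⁻¹] be a k[t]-submodule, and let f : V → W be k-linear with (f ⊗ id)(M) ⊆ N. If the quotient k[t]-module N / (f ⊗ id)(M) has no k[t]-torsion, then f(F_M(n)) = f(V) ∩ F_N(n) for every n ∈ ℤ. (This is the module-theoretic content of the paper's Lemma 'modulo codim two': a morphism of equivariant vector bundles whose cokernel is again a bundle is strict on the associated filtrations, Ξ(f)(F^τ(n, 𝓔)) = Ξ(f)(B(𝓔)) ∩ F^τ(n, 𝓕).) -/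
/-- Strictness of morphisms on associated filtrations: if `M ⊆ V[t,t⁻¹]` is a graded
`k[t]`-submodule containing `t^{N₀}·(V ⊗ k[t])`, `N ⊆ W[t,t⁻¹]` is a `k[t]`-submodule,
`f : V → W` is linear with `(f ⊗ id)(M) ⊆ N`, and the quotient `N / (f ⊗ id)(M)` has no
`k[t]`-torsion, then `f (F_M(n)) = f(V) ∩ F_N(n)` for every `n`. Here `V[t,t⁻¹]` is
modelled as `ℤ →₀ V`, `TV`/`TW` are the multiplication-by-`t` operators, and
`F_M(n) = {v | v ⊗ t^{-n} ∈ M}`. -/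
theorem stmt_5 {k V W : Type*} [Field k]
    [AddCommGroup V] [Module k V] [FiniteDimensional k V]
    [AddCommGroup W] [Module k W] [FiniteDimensional k W]
    (TV : Module.End k (ℤ →₀ V))
    (hTV : ∀ (p : ℤ) (v : V), TV (Finsupp.single p v) = Finsupp.single (p + 1) v)
    (TW : Module.End k (ℤ →₀ W))
    (hTW : ∀ (p : ℤ) (w : W), TW (Finsupp.single p w) = Finsupp.single (p + 1) w)
    (M : Submodule k (ℤ →₀ V))
    (hTM : ∀ g ∈ M, TV g ∈ M)
    (hgraded : ∀ g ∈ M, ∀ p : ℤ, Finsupp.single p (g p) ∈ M)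
    (N₀ : ℕ)
    (hlow : ∀ (p : ℤ) (v : V), (N₀ : ℤ) ≤ p → Finsupp.single p v ∈ M)
    (N : Submodule k (ℤ →₀ W))
    (hTN : ∀ g ∈ N, TW g ∈ N)
    (f : V →ₗ[k] W)
    (fmap : (ℤ →₀ V) →ₗ[k] (ℤ →₀ W))
    (hfmap : ∀ (p : ℤ) (v : V), fmap (Finsupp.single p v) = Finsupp.single p (f v))
    (hMN : M.map fmap ≤ N)
    (htorsionfree : ∀ g ∈ N, ∀ q : Polynomial k, q ≠ 0 →
      (Polynomial.aeval TW q) g ∈ M.map fmap → g ∈ M.map fmap)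
    (n : ℤ) :
    (M.comap (Finsupp.lsingle (-n))).map f
      = LinearMap.range f ⊓ N.comap (Finsupp.lsingle (-n)) := by
  have key : ∀ (h : ℤ →₀ V) (p : ℤ), fmap h p = f (h p) := by
    intro h
    induction h using Finsupp.induction_linear with
    | zero => intro p; simp
    | add a b ha hb => intro p; simp [ha p, hb p]
    | single a b =>
      intro p
      rw [hfmap]
      by_cases hp : p = a
      · subst hp; simp
      · simp [Finsupp.single_apply, Ne.symm hp]
  have powW : ∀ (m : ℕ) (p : ℤ) (w : W),
      (TW ^ m) (Finsupp.single p w) = Finsupp.single (p + m) w := by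
    intro m
    induction m with
    | zero => intro p w; simp
    | succ m ih =>
      intro p w
      rw [pow_succ', Module.End.mul_apply, ih, hTW]
      congr 1
      push_cast
      ring
  ext w
  simp only [Submodule.mem_map, Submodule.mem_inf, LinearMap.mem_range,
    Submodule.mem_comap, Finsupp.lsingle_apply]
  constructor
  · rintro ⟨v, hv, rfl⟩
    refine ⟨⟨v, rfl⟩, ?_⟩
    have : fmap (Finsupp.single (-n) v) ∈ N :=
      hMN ⟨Finsupp.single (-n) v, hv, rfl⟩
    rwa [hfmap] at this
  · rintro ⟨⟨v, rfl⟩, hN⟩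
    set m : ℕ := (N₀ + n).toNat with hm
    have hmN : (N₀ : ℤ) ≤ -n + m := by
      have := Int.self_le_toNat (N₀ + n)
      omega
    have hMem : (TW ^ m) (Finsupp.single (-n) (f v)) ∈ M.map fmap := by
      rw [powW]
      exact ⟨Finsupp.single (-n + m) v, hlow _ v hmN, hfmap _ _⟩
    have hq : (Polynomial.X ^ m : Polynomial k) ≠ 0 :=
      pow_ne_zero _ Polynomial.X_ne_zero
    have := htorsionfree _ hN (Polynomial.X ^ m) hq (by
      rwa [map_pow, Polynomial.aeval_X])
    obtain ⟨h, hh, heq⟩ := this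
    refine ⟨h (-n), hgraded h hh (-n), ?_⟩
    have : fmap h (-n) = f (h (-n)) := key h (-n)
    rw [heq] at this
    simpa using this.symm
end
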